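/- arXiv:0902.0383 — 2 statements merged into one kernel-verified Lean document; each statement's English description precedes it below -/
import Mathlib

section
/- Let T₁, …, T_{n−1} be invertible elements of an associative unital algebra over ℂ satisfying Tᵢ² = −Id, TᵢTⱼ = TⱼTᵢ for |i−j| > 1, and TᵢT_{i+1} = −T_{i+1}Tᵢ. Then the elements Řᵢ = (Id + Tᵢ)/√2 satisfy the braid relations ŘᵢŘ_{i+1}Řᵢ = Ř_{i+1}ŘᵢŘ_{i+1} and ŘᵢŘⱼ = ŘⱼŘᵢ for |i−j| > 1, and each Řᵢ is invertible. -/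
private lemma braid_key {A : Type*} [Ring A] (x y : A)
    (hxx : x * x = -1) (hxy : x * y = -(y * x)) :
    (1 + x) * (1 + y) * (1 + x) = 2 * (x + y) := by
  have hxyx : x * y * x = y := by
    rw [hxy, neg_mul, mul_assoc, hxx, mul_neg_one, neg_neg]
  calc (1 + x) * (1 + y) * (1 + x)
      = 1 + x + y + x * y + x + x * x + y * x + x * y * x := by noncomm_ring
    _ = 2 * (x + y) := by rw [hxyx, hxx, hxy]; noncomm_ring

/-- Let `T 0, …, T (m-1)` be invertible elements of an associative unital
`ℂ`-algebra satisfying `(T i)² = -1`, commuting at distance `≥ 2` and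
anticommuting at adjacent indices.  Then the elements
`Ř i = (1 + T i)/√2` satisfy the braid relations, commute at distance `≥ 2`,
and are invertible. -/
theorem braid_relations_from_extraspecial (A : Type*) [Ring A] [Algebra ℂ A]
    (m : ℕ) (T : ℕ → A)
    (hunit : ∀ i, i < m → IsUnit (T i))
    (hsq : ∀ i, i < m → T i ^ 2 = -1)
    (hcom : ∀ i j, i + 2 ≤ j → j < m → T i * T j = T j * T i)
    (hadj : ∀ i, i + 1 < m → T i * T (i + 1) = -(T (i + 1) * T i))
    (R : ℕ → A)
    (hR : ∀ i, R i = ((Real.sqrt 2 : ℂ))⁻¹ • (1 + T i)) :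
    (∀ i, i + 1 < m → R i * R (i + 1) * R i = R (i + 1) * R i * R (i + 1)) ∧
    (∀ i j, i + 2 ≤ j → j < m → R i * R j = R j * R i) ∧
    (∀ i, i < m → IsUnit (R i)) := by
  set c : ℂ := ((Real.sqrt 2 : ℂ))⁻¹ with hc
  have hmul : ∀ x y : A, (c • x) * (c • y) = (c * c) • (x * y) := by
    intro x y; rw [smul_mul_smul_comm]
  have hmul3 : ∀ x y z : A, (c • x) * (c • y) * (c • z) = (c * c * c) • (x * y * z) := by
    intro x y z; rw [smul_mul_smul_comm, smul_mul_smul_comm]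
  have hs : ((Real.sqrt 2 : ℝ) : ℂ) * ((Real.sqrt 2 : ℝ) : ℂ) = 2 := by
    norm_cast
    exact Real.mul_self_sqrt (by norm_num)
  have hcc : c * c = (2 : ℂ)⁻¹ := by
    rw [hc, ← mul_inv, hs]
  have hTT : ∀ i, i < m → T i * T i = -1 := by
    intro i hi
    have := hsq i hi
    rwa [pow_two] at this
  refine ⟨?_, ?_, ?_⟩
  · intro i hi
    have h1 := braid_key (T i) (T (i + 1)) (hTT i (Nat.lt_of_succ_lt hi)) (hadj i hi)
    have hxy' : T (i + 1) * T i = -(T i * T (i + 1)) := by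
      rw [hadj i hi, neg_neg]
    have h2 := braid_key (T (i + 1)) (T i) (hTT (i + 1) hi) hxy'
    rw [hR i, hR (i + 1), hmul3, hmul3, h1, h2, add_comm (T (i + 1)) (T i)]
  · intro i j hij hj
    have hi : i < m := lt_of_lt_of_le (by omega) (le_of_lt hj)
    rw [hR i, hR j, hmul, hmul]
    congr 1
    have h := hcom i j hij hj
    noncomm_ring
    rw [h]
  · intro i hi
    have h1 : (c • (1 + T i)) * (c • (1 - T i)) = 1 := by
      rw [hmul, hcc]
      have : (1 + T i) * (1 - T i) = 2 := by
        have := hTT i hi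
        noncomm_ring
        rw [this]; norm_num
      rw [this]
      have h2 : (2 : A) = (2 : ℂ) • (1 : A) := by
       rw [two_smul]; norm_num
      rw [h2, smul_smul, inv_mul_cancel₀ (by norm_num : (2:ℂ) ≠ 0), one_smul]
    have h2 : (c • (1 - T i)) * (c • (1 + T i)) = 1 := by
      rw [hmul, hcc]
      have : (1 - T i) * (1 + T i) = 2 := by
        have := hTT i hi
        noncomm_ring
        rw [this]; norm_num
      rw [this]
      have h2 : (2 : A) = (2 : ℂ) • (1 : A) := by
       rw [two_smul]; norm_num
      rw [h2, smul_smul, inv_mul_cancel₀ (by norm_num : (2:ℂ) ≠ 0), one_smul]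
    exact ⟨⟨R i, c • (1 - T i), by rw [hR i]; exact h1, by rw [hR i]; exact h2⟩, rfl⟩
end

section
/- Let Q₈ be the quaternion group and D₈ the dihedral group of order 8, each with center of order 2 generated by a central involution. Then the central products Q₈ ∘ Q₈ and D₈ ∘ D₈ (quotients of Q₈ × Q₈ resp. D₈ × D₈ by the antidiagonal copy of the centers) are isomorphic groups of order 32. -/
open QuaternionGroup DihedralGroup

lemma mem_closure_invol {G : Type*} [Group G] {g : G} (h : g * g = 1) (x : G) :
    x ∈ Subgroup.closure {g} ↔ x = 1 ∨ x = g := by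
  rw [← Subgroup.zpowers_eq_closure]
  constructor
  · rintro ⟨k, rfl⟩
    have hg2 : g ^ (2:ℤ) = 1 := by rw [show (2:ℤ) = 1 + 1 by norm_num, zpow_add, zpow_one, h]
    simp only
    rcases Int.even_or_odd k with ⟨m, rfl⟩ | ⟨m, rfl⟩
    · left; rw [show m + m = 2 * m by ring, zpow_mul, hg2, one_zpow]
    · right; rw [zpow_add, zpow_mul, hg2, one_zpow, one_mul, zpow_one]
  · rintro (rfl | rfl)
    · exact one_mem _
    · exact Subgroup.mem_zpowers _

lemma hDinv : ((DihedralGroup.r 2, DihedralGroup.r 2) : DihedralGroup 4 × DihedralGroup 4) *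
    (DihedralGroup.r 2, DihedralGroup.r 2) = 1 := by decide

lemma hQinv : ((QuaternionGroup.a 2, QuaternionGroup.a 2) : QuaternionGroup 2 × QuaternionGroup 2) *
    (QuaternionGroup.a 2, QuaternionGroup.a 2) = 1 := by decide

instance decD : DecidablePred (· ∈ Subgroup.closure {((DihedralGroup.r 2, DihedralGroup.r 2) : DihedralGroup 4 × DihedralGroup 4)}) :=
  fun x => decidable_of_iff _ (mem_closure_invol hDinv x).symm

instance decQ : DecidablePred (· ∈ Subgroup.closure {((QuaternionGroup.a 2, QuaternionGroup.a 2) : QuaternionGroup 2 × QuaternionGroup 2)}) :=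
  fun x => decidable_of_iff _ (mem_closure_invol hQinv x).symm

instance normD : (Subgroup.closure {((DihedralGroup.r 2, DihedralGroup.r 2) : DihedralGroup 4 × DihedralGroup 4)}).Normal := by
  constructor
  intro n hn g
  rw [mem_closure_invol hDinv] at hn ⊢
  rcases hn with rfl | rfl
  · left; simp
  · right; revert g; decide

instance normQ : (Subgroup.closure {((QuaternionGroup.a 2, QuaternionGroup.a 2) : QuaternionGroup 2 × QuaternionGroup 2)}).Normal := by
  constructor
  intro n hn g
  rw [mem_closure_invol hQinv] at hn ⊢
  rcases hn with rfl | rfl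
  · left; simp
  · right; revert g; decide

instance (priority := 2000) decEqQuotD :
    DecidableEq ((DihedralGroup 4 × DihedralGroup 4) ⧸ Subgroup.closure {((DihedralGroup.r 2, DihedralGroup.r 2) : DihedralGroup 4 × DihedralGroup 4)}) :=
  fun a b => Quotient.recOnSubsingleton₂ a b fun x y =>
    decidable_of_iff (x⁻¹ * y ∈ Subgroup.closure {((DihedralGroup.r 2, DihedralGroup.r 2) : DihedralGroup 4 × DihedralGroup 4)})
      (QuotientGroup.eq (a := x) (b := y)).symm

instance (priority := 2000) decEqQuotQ :
    DecidableEq ((QuaternionGroup 2 × QuaternionGroup 2) ⧸ Subgroup.closure {((QuaternionGroup.a 2, QuaternionGroup.a 2) : QuaternionGroup 2 × QuaternionGroup 2)}) :=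
  fun a b => Quotient.recOnSubsingleton₂ a b fun x y =>
    decidable_of_iff (x⁻¹ * y ∈ Subgroup.closure {((QuaternionGroup.a 2, QuaternionGroup.a 2) : QuaternionGroup 2 × QuaternionGroup 2)})
      (QuotientGroup.eq (a := x) (b := y)).symm

/-- The underlying function of the homomorphism `Q₈ × Q₈ → D₈ ∘ D₈`. -/
def phi0 : QuaternionGroup 2 × QuaternionGroup 2 → DihedralGroup 4 × DihedralGroup 4
  | (a i, a j) => (r i, r j)
  | (a i, xa j) => (r (i+1), sr j)
  | (xa i, a j) => (sr i, r (j+1))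
  | (xa i, xa j) => (sr (i+1), sr (j-1))

set_option maxRecDepth 10000 in
def Phi : (QuaternionGroup 2 × QuaternionGroup 2) →*
    ((DihedralGroup 4 × DihedralGroup 4) ⧸ Subgroup.closure {((DihedralGroup.r 2, DihedralGroup.r 2) : DihedralGroup 4 × DihedralGroup 4)}) :=
  MonoidHom.mk' (fun p => QuotientGroup.mk (phi0 p)) (by decide)

set_option maxRecDepth 10000 in
lemma Phi_surj : Function.Surjective Phi := by
  intro y
  obtain ⟨d, rfl⟩ := QuotientGroup.mk_surjective y
  revert d
  decide

set_option maxRecDepth 10000 in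
lemma Phi_ker : Phi.ker = Subgroup.closure {((QuaternionGroup.a 2, QuaternionGroup.a 2) : QuaternionGroup 2 × QuaternionGroup 2)} := by
  ext x
  rw [MonoidHom.mem_ker]
  revert x
  decide

/-- The central products `Q₈ ∘ Q₈` and `D₈ ∘ D₈` — quotients of `Q₈ × Q₈`
resp. `D₈ × D₈` by the antidiagonal copy of the centers, generated by the pair
of central involutions — are isomorphic groups of order 32. -/
theorem central_products_QQ_DD_iso
    (NQ : Subgroup (QuaternionGroup 2 × QuaternionGroup 2))
    (hNQ : NQ = Subgroup.closure {(QuaternionGroup.a 2, QuaternionGroup.a 2)})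
    [NQ.Normal]
    (ND : Subgroup (DihedralGroup 4 × DihedralGroup 4))
    (hND : ND = Subgroup.closure {(DihedralGroup.r 2, DihedralGroup.r 2)})
    [ND.Normal] :
    Nonempty (((QuaternionGroup 2 × QuaternionGroup 2) ⧸ NQ) ≃*
      ((DihedralGroup 4 × DihedralGroup 4) ⧸ ND)) ∧
    Nat.card ((QuaternionGroup 2 × QuaternionGroup 2) ⧸ NQ) = 32 ∧
    Nat.card ((DihedralGroup 4 × DihedralGroup 4) ⧸ ND) = 32 := by
  subst hNQ
  subst hND
  have e := (QuotientGroup.quotientMulEquivOfEq Phi_ker.symm).trans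
    (QuotientGroup.quotientKerEquivOfSurjective Phi Phi_surj)
  have hQcard : Nat.card (QuaternionGroup 2 × QuaternionGroup 2) = 64 := by
    rw [Nat.card_eq_fintype_card]; decide
  have hDcard : Nat.card (DihedralGroup 4 × DihedralGroup 4) = 64 := by
    rw [Nat.card_eq_fintype_card]; decide
  have hQN : Nat.card (Subgroup.closure {((QuaternionGroup.a 2, QuaternionGroup.a 2) : QuaternionGroup 2 × QuaternionGroup 2)}) = 2 := by
    rw [Nat.card_eq_fintype_card]; decide
  have hDN : Nat.card (Subgroup.closure {((DihedralGroup.r 2, DihedralGroup.r 2) : DihedralGroup 4 × DihedralGroup 4)}) = 2 := by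
    rw [Nat.card_eq_fintype_card]; decide
  have h1 := Subgroup.card_mul_index (Subgroup.closure {((QuaternionGroup.a 2, QuaternionGroup.a 2) : QuaternionGroup 2 × QuaternionGroup 2)})
  have h2 := Subgroup.card_mul_index (Subgroup.closure {((DihedralGroup.r 2, DihedralGroup.r 2) : DihedralGroup 4 × DihedralGroup 4)})
  rw [hQcard, hQN] at h1
  rw [hDcard, hDN] at h2
  exact ⟨⟨e⟩, by rw [show Nat.card _ = Subgroup.index _ from rfl]; omega,
    by rw [show Nat.card _ = Subgroup.index _ from rfl]; omega⟩
end
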